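/- Let τ > 0 and γ > 0. Then ∫_{−∞}^{∞} (sin(u·τ)/(u·τ))² · exp(−γ·u²) du = (2√π/τ) · ∫₀^{τ/√γ} exp(−s²) ds − (√(π·γ)/τ²) · (1 − exp(−τ²/γ)). -/

import Mathlib

open MeasureTheory

/-- Gaussian–cosine integral. -/
lemma gaussian_cos_integral (γ c : ℝ) (hγ : 0 < γ) :
    (∫ u : ℝ, Real.exp (-γ * u ^ 2) * Real.cos (c * u)) =
      Real.sqrt (Real.pi / γ) * Real.exp (-c ^ 2 / (4 * γ)) := by
  have hb : (0 : ℝ) < (γ : ℂ).re := by simpa using hγ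
  have h := fourierIntegral_gaussian (b := (γ : ℂ)) hb (c : ℂ)
  have hint : Integrable fun u : ℝ =>
      Complex.exp (Complex.I * (c : ℂ) * u) * Complex.exp (-(γ : ℂ) * u ^ 2) := by
    have := integrable_cexp_quadratic hb (Complex.I * (c : ℂ)) 0
    refine this.congr (Filter.Eventually.of_forall fun u => ?_)
    show Complex.exp _ = Complex.exp _ * Complex.exp _
    rw [← Complex.exp_add]
    congr 1
    ring
  have hre : ∀ u : ℝ,
      (Complex.exp (Complex.I * (c : ℂ) * u) * Complex.exp (-(γ : ℂ) * u ^ 2)).re =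
        Real.exp (-γ * u ^ 2) * Real.cos (c * u) := by
    intro u
    have h1 : Complex.I * (c : ℂ) * u = ((c * u : ℝ) : ℂ) * Complex.I := by
      push_cast; ring
    have h2 : -(γ : ℂ) * (u : ℂ) ^ 2 = ((-γ * u ^ 2 : ℝ) : ℂ) := by push_cast; ring
    rw [h1, h2, ← Complex.ofReal_exp, mul_comm, Complex.re_ofReal_mul,
      Complex.exp_ofReal_mul_I_re]
  have hreInt : (∫ u : ℝ, Real.exp (-γ * u ^ 2) * Real.cos (c * u)) =
      (∫ u : ℝ, Complex.exp (Complex.I * (c : ℂ) * u) *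
        Complex.exp (-(γ : ℂ) * u ^ 2)).re := by
    have h5 := integral_re hint
    exact (integral_congr_ae (Filter.Eventually.of_forall fun u => (hre u).symm)).trans h5
  rw [hreInt, h]
  have hπγ : (0 : ℝ) ≤ Real.pi / γ := by positivity
  have hcpow : ((Real.pi : ℂ) / (γ : ℂ)) ^ (1 / 2 : ℂ) =
      ((Real.sqrt (Real.pi / γ) : ℝ) : ℂ) := by
    rw [show (Real.pi : ℂ) / (γ : ℂ) = ((Real.pi / γ : ℝ) : ℂ) by push_cast; ring,
      show (1 / 2 : ℂ) = ((1 / 2 : ℝ) : ℂ) by push_cast; ring,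
      ← Complex.ofReal_cpow hπγ, Real.sqrt_eq_rpow]
  have hexp : Complex.exp (-(c : ℂ) ^ 2 / (4 * (γ : ℂ))) =
      ((Real.exp (-c ^ 2 / (4 * γ)) : ℝ) : ℂ) := by
    rw [Complex.ofReal_exp]
    congr 1
    push_cast
    ring
  rw [hcpow, hexp, ← Complex.ofReal_mul, Complex.ofReal_re]

/-- Triangle representation of `sin²`. -/
lemma triangle_cos_integral (τ u : ℝ) (hu : u ≠ 0) :
    (∫ x in (0:ℝ)..(2 * τ), (2 * τ - x) * Real.cos (x * u)) =
      2 * Real.sin (τ * u) ^ 2 / u ^ 2 := by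
  have hderiv : ∀ x ∈ Set.uIcc (0:ℝ) (2 * τ),
      HasDerivAt (fun x => (2 * τ - x) * Real.sin (x * u) / u - Real.cos (x * u) / u ^ 2)
        ((2 * τ - x) * Real.cos (x * u)) x := by
    intro x _
    have hxu : HasDerivAt (fun x : ℝ => x * u) u x := hasDerivAt_mul_const u
    have hs : HasDerivAt (fun x : ℝ => Real.sin (x * u)) (Real.cos (x * u) * u) x :=
      hxu.sin
    have hc : HasDerivAt (fun x : ℝ => Real.cos (x * u)) (-Real.sin (x * u) * u) x :=
      hxu.cos
    have hlin : HasDerivAt (fun x : ℝ => 2 * τ - x) (-1) x := by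
      simpa using (hasDerivAt_id x).const_sub (2 * τ)
    have := ((hlin.mul hs).div_const u).sub (hc.div_const (u ^ 2))
    refine this.congr_deriv ?_
    field_simp
    ring
  have hcont : IntervalIntegrable (fun x => (2 * τ - x) * Real.cos (x * u)) volume 0 (2 * τ) := by
    apply Continuous.intervalIntegrable
    continuity
  rw [intervalIntegral.integral_eq_sub_of_hasDerivAt hderiv hcont]
  have h2 : Real.cos (2 * (τ * u)) = Real.cos (τ * u) ^ 2 - Real.sin (τ * u) ^ 2 :=
    Real.cos_two_mul' _
  have h3 : Real.sin (τ * u) ^ 2 + Real.cos (τ * u) ^ 2 = 1 := Real.sin_sq_add_cos_sq _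
  have h4 : (2 * τ) * u = 2 * (τ * u) := by ring
  simp only [h4, h2, Real.sin_zero, Real.cos_zero, zero_mul, sub_self, mul_zero]
  field_simp
  rw [mul_comm u τ]
  nlinarith [h3]

set_option maxHeartbeats 2000000 in
theorem sinc_sq_gaussian_integral (τ γ : ℝ) (hτ : 0 < τ) (hγ : 0 < γ) :
    (∫ u : ℝ, (Real.sin (u * τ) / (u * τ)) ^ 2 * Real.exp (-γ * u ^ 2)) =
      (2 * Real.sqrt Real.pi / τ) *
          (∫ s in (0:ℝ)..(τ / Real.sqrt γ), Real.exp (-s ^ 2)) -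
        (Real.sqrt (Real.pi * γ) / τ ^ 2) * (1 - Real.exp (-τ ^ 2 / γ)) := by
  have hτ0 : τ ≠ 0 := ne_of_gt hτ
  have hsγ : (0:ℝ) < Real.sqrt γ := Real.sqrt_pos.mpr hγ
  have h2τ : (0:ℝ) ≤ 2 * τ := by linarith
  -- Step 1: rewrite the integrand a.e.
  have hae : ∀ᵐ u : ℝ, (Real.sin (u * τ) / (u * τ)) ^ 2 * Real.exp (-γ * u ^ 2) =
      (1 / (2 * τ ^ 2)) * (Real.exp (-γ * u ^ 2) *
        ∫ x in (0:ℝ)..(2 * τ), (2 * τ - x) * Real.cos (x * u)) := by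
    have h0 : ∀ᵐ u : ℝ, u ≠ 0 := by
      exact compl_mem_ae_iff.mpr (measure_singleton (0:ℝ))
    filter_upwards [h0] with u hu
    rw [triangle_cos_integral τ u hu]
    rw [show u * τ = τ * u by ring]
    rw [div_pow]
    field_simp
  rw [integral_congr_ae hae, integral_const_mul]
  -- Step 2: Fubini
  have hswap : (∫ u : ℝ, Real.exp (-γ * u ^ 2) *
        ∫ x in (0:ℝ)..(2 * τ), (2 * τ - x) * Real.cos (x * u)) =
      ∫ x in (0:ℝ)..(2 * τ), ∫ u : ℝ, Real.exp (-γ * u ^ 2) *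
        ((2 * τ - x) * Real.cos (x * u)) := by
    have key : (∫ u : ℝ, ∫ x in Set.Ioc (0:ℝ) (2 * τ),
          Real.exp (-γ * u ^ 2) * ((2 * τ - x) * Real.cos (x * u))) =
        ∫ x in Set.Ioc (0:ℝ) (2 * τ), ∫ u : ℝ,
          Real.exp (-γ * u ^ 2) * ((2 * τ - x) * Real.cos (x * u)) := by
      apply integral_integral_swap
      have hbound : Integrable (fun p : ℝ × ℝ => Real.exp (-γ * p.1 ^ 2) * (2 * τ + |p.2|))
          (volume.prod (volume.restrict (Set.Ioc (0:ℝ) (2 * τ)))) := by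
        exact (integrable_exp_neg_mul_sq hγ).mul_prod
          ((continuous_const.add continuous_abs).integrableOn_Ioc)
      refine hbound.mono' ?_ (Filter.Eventually.of_forall fun p => ?_)
      on_goal 2 => obtain ⟨u, x⟩ := p
      · apply Continuous.aestronglyMeasurable
        have : Continuous fun p : ℝ × ℝ =>
            Real.exp (-γ * p.1 ^ 2) * ((2 * τ - p.2) * Real.cos (p.2 * p.1)) := by fun_prop
        exact this
      · simp only [Function.uncurry_apply_pair, Real.norm_eq_abs, abs_mul,
          Real.abs_exp]
        have h1 : |2 * τ - x| ≤ 2 * τ + |x| := by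
          calc |2 * τ - x| ≤ |2 * τ| + |x| := abs_sub _ _
            _ = 2 * τ + |x| := by rw [abs_of_nonneg h2τ]
        have h2 : |Real.cos (x * u)| ≤ 1 := Real.abs_cos_le_one _
        have h3 : (0:ℝ) ≤ Real.exp (-γ * u ^ 2) := Real.exp_nonneg _
        calc Real.exp (-γ * u ^ 2) * (|2 * τ - x| * |Real.cos (x * u)|) ≤
              Real.exp (-γ * u ^ 2) * ((2 * τ + |x|) * 1) := by
                apply mul_le_mul_of_nonneg_left _ h3
                exact mul_le_mul h1 h2 (abs_nonneg _) (by positivity)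
          _ = Real.exp (-γ * u ^ 2) * (2 * τ + |x|) := by ring
    have e1 : ∀ u : ℝ, (∫ x in (0:ℝ)..(2 * τ), (2 * τ - x) * Real.cos (x * u)) =
        ∫ x in Set.Ioc (0:ℝ) (2 * τ), (2 * τ - x) * Real.cos (x * u) := fun u =>
      intervalIntegral.integral_of_le h2τ
    simp_rw [e1, ← integral_const_mul]
    rw [key, intervalIntegral.integral_of_le h2τ]
  rw [hswap]
  -- Step 3: evaluate the inner Gaussian integral
  have hinner : ∀ x : ℝ, (∫ u : ℝ, Real.exp (-γ * u ^ 2) * ((2 * τ - x) * Real.cos (x * u))) =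
      (2 * τ - x) * (Real.sqrt (Real.pi / γ) * Real.exp (-x ^ 2 / (4 * γ))) := by
    intro x
    rw [← gaussian_cos_integral γ x hγ, ← integral_const_mul]
    congr 1
    ext u
    ring
  simp_rw [hinner]
  -- Step 4: evaluate the remaining single integrals
  have hcont1 : IntervalIntegrable (fun x : ℝ => Real.exp (-x ^ 2 / (4 * γ))) volume 0 (2 * τ) := by
    apply Continuous.intervalIntegrable; continuity
  have hcont2 : IntervalIntegrable (fun x : ℝ => x * Real.exp (-x ^ 2 / (4 * γ)))
      volume 0 (2 * τ) := by
    apply Continuous.intervalIntegrable; continuity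
  have hsplit : (∫ x in (0:ℝ)..(2 * τ),
        (2 * τ - x) * (Real.sqrt (Real.pi / γ) * Real.exp (-x ^ 2 / (4 * γ)))) =
      Real.sqrt (Real.pi / γ) * ((2 * τ) * (∫ x in (0:ℝ)..(2 * τ), Real.exp (-x ^ 2 / (4 * γ)))
        - ∫ x in (0:ℝ)..(2 * τ), x * Real.exp (-x ^ 2 / (4 * γ))) := by
    calc (∫ x in (0:ℝ)..(2 * τ),
          (2 * τ - x) * (Real.sqrt (Real.pi / γ) * Real.exp (-x ^ 2 / (4 * γ)))) =
        ∫ x in (0:ℝ)..(2 * τ),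
          (Real.sqrt (Real.pi / γ) * (2 * τ * Real.exp (-x ^ 2 / (4 * γ))) -
            Real.sqrt (Real.pi / γ) * (x * Real.exp (-x ^ 2 / (4 * γ)))) :=
        intervalIntegral.integral_congr fun x _ => by ring
      _ = (∫ x in (0:ℝ)..(2 * τ), Real.sqrt (Real.pi / γ) * (2 * τ * Real.exp (-x ^ 2 / (4 * γ))))
            - ∫ x in (0:ℝ)..(2 * τ), Real.sqrt (Real.pi / γ) *
              (x * Real.exp (-x ^ 2 / (4 * γ))) :=
        intervalIntegral.integral_sub ((hcont1.const_mul _).const_mul _) (hcont2.const_mul _)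
      _ = Real.sqrt (Real.pi / γ) *
            ((2 * τ) * (∫ x in (0:ℝ)..(2 * τ), Real.exp (-x ^ 2 / (4 * γ)))
              - ∫ x in (0:ℝ)..(2 * τ), x * Real.exp (-x ^ 2 / (4 * γ))) := by
        rw [intervalIntegral.integral_const_mul, intervalIntegral.integral_const_mul,
          intervalIntegral.integral_const_mul]
        ring
  rw [hsplit]
  -- ∫₀^{2τ} x e^{-x²/(4γ)} dx = 2γ(1 - e^{-τ²/γ})
  have hB : (∫ x in (0:ℝ)..(2 * τ), x * Real.exp (-x ^ 2 / (4 * γ))) =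
      2 * γ * (1 - Real.exp (-τ ^ 2 / γ)) := by
    have hd : ∀ x ∈ Set.uIcc (0:ℝ) (2 * τ),
        HasDerivAt (fun x : ℝ => -(2 * γ) * Real.exp (-x ^ 2 / (4 * γ)))
          (x * Real.exp (-x ^ 2 / (4 * γ))) x := by
      intro x _
      have h1 : HasDerivAt (fun x : ℝ => -x ^ 2 / (4 * γ)) (-(2 * x) / (4 * γ)) x := by
        have := ((hasDerivAt_pow 2 x).neg).div_const (4 * γ)
        simpa using this
      have h2 := (h1.exp).const_mul (-(2 * γ))
      refine h2.congr_deriv ?_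
      field_simp
      ring
    rw [intervalIntegral.integral_eq_sub_of_hasDerivAt hd hcont2]
    have : -(2 * τ) ^ 2 / (4 * γ) = -τ ^ 2 / γ := by field_simp; ring
    rw [this]
    simp [Real.exp_zero]
    ring
  -- ∫₀^{2τ} e^{-x²/(4γ)} dx = 2√γ ∫₀^{τ/√γ} e^{-s²} ds
  have hA : (∫ x in (0:ℝ)..(2 * τ), Real.exp (-x ^ 2 / (4 * γ))) =
      2 * Real.sqrt γ * ∫ s in (0:ℝ)..(τ / Real.sqrt γ), Real.exp (-s ^ 2) := by
    have hc : (2 * Real.sqrt γ : ℝ) ≠ 0 := by positivity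
    have hcomp := intervalIntegral.integral_comp_mul_left
      (fun x : ℝ => Real.exp (-x ^ 2 / (4 * γ))) (a := 0) (b := τ / Real.sqrt γ) hc
    have he : ∀ s : ℝ, Real.exp (-(2 * Real.sqrt γ * s) ^ 2 / (4 * γ)) = Real.exp (-s ^ 2) := by
      intro s
      congr 1
      have : Real.sqrt γ ^ 2 = γ := Real.sq_sqrt hγ.le
      field_simp
      nlinarith [this]
    have hub : 2 * Real.sqrt γ * (τ / Real.sqrt γ) = 2 * τ := by
      field_simp
    simp only [he, mul_zero, hub] at hcomp
    rw [hcomp, smul_eq_mul]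
    field_simp
  rw [hA, hB]
  -- Final algebra with square roots
  have hs1 : Real.sqrt (Real.pi / γ) * Real.sqrt γ = Real.sqrt Real.pi := by
    rw [← Real.sqrt_mul (by positivity), div_mul_cancel₀ _ (ne_of_gt hγ)]
  have hs2 : Real.sqrt (Real.pi / γ) * γ = Real.sqrt (Real.pi * γ) := by
    rw [show Real.pi * γ = Real.pi / γ * γ ^ 2 by field_simp,
      Real.sqrt_mul (by positivity : (0:ℝ) ≤ Real.pi / γ), Real.sqrt_sq hγ.le]
  set E := ∫ s in (0:ℝ)..(τ / Real.sqrt γ), Real.exp (-s ^ 2)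
  set X := Real.exp (-τ ^ 2 / γ)
  have expand : 1 / (2 * τ ^ 2) * (Real.sqrt (Real.pi / γ) *
      (2 * τ * (2 * Real.sqrt γ * E) - 2 * γ * (1 - X))) =
      (2 * (Real.sqrt (Real.pi / γ) * Real.sqrt γ) / τ) * E -
        ((Real.sqrt (Real.pi / γ) * γ) / τ ^ 2) * (1 - X) := by
    field_simp
  rw [expand, hs1, hs2]
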